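/- Let K ≥ 1 be an integer and a, b, c ∈ ℝ. Let N be the 2K × 2K real symmetric matrix with diagonal entries N(i,i) = c for 1 ≤ i ≤ 2K except N(1,1) = N(2K,2K) = c + a; with off-diagonal entries N(i,i+1) = N(i+1,i) equal to b when i is odd and equal to a when i is even (1 ≤ i ≤ 2K−1); and all other entries zero. Then the characteristic polynomial of N equals (X − (c+a+b))·(X − (c+a−b))·∏_{j=1}^{K−1} ( (X − c)² − (a² + b² + 2ab·cos(πj/K)) ). Equivalently, the eigenvalues of N are c ± √(a² + b² + 2ab·cos(πj/K)) for j = 1, …, K−1, together with c + a + b and c + a − b. -/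

import Mathlib

open Polynomial

namespace MesaAux

noncomputable def offd (a b : ℝ) : ℕ → ℝ := fun n => if n % 2 = 0 then b else a

noncomputable def Mmat (K : ℕ) (a b c : ℝ) : Matrix (Fin (2*K)) (Fin (2*K)) ℝ :=
  Matrix.diagonal (fun i : Fin (2*K) => if i.val = 0 ∨ i.val = 2*K - 1 then c + a else c)
  + Matrix.of (fun i j : Fin (2*K) => if i.val + 1 = j.val then offd a b i.val else 0)
  + Matrix.of (fun i j : Fin (2*K) => if j.val + 1 = i.val then offd a b j.val else 0)

lemma up_mulVec (K : ℕ) (t : ℕ → ℝ) (v : Fin (2*K) → ℝ) (i : Fin (2*K)) :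
    (Matrix.of (fun i j : Fin (2*K) => if i.val + 1 = j.val then t i.val else 0)).mulVec v i
      = if h : i.val + 1 < 2*K then t i.val * v ⟨i.val+1, h⟩ else 0 := by
  unfold Matrix.mulVec dotProduct
  split_ifs with h
  · rw [Finset.sum_eq_single (⟨i.val+1, h⟩ : Fin (2*K))]
    · simp
    · intro j _ hj
      simp only [Matrix.of_apply]
      rw [if_neg, zero_mul]
      intro hc; exact hj (Fin.ext hc.symm)
    · simp
  · apply Finset.sum_eq_zero; intro j _
    simp only [Matrix.of_apply]
    rw [if_neg, zero_mul]
    intro hc; exact h (hc ▸ j.isLt)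

lemma low_mulVec (K : ℕ) (t : ℕ → ℝ) (v : Fin (2*K) → ℝ) (i : Fin (2*K)) :
    (Matrix.of (fun i j : Fin (2*K) => if j.val + 1 = i.val then t j.val else 0)).mulVec v i
      = if h : 0 < i.val then t (i.val-1) * v ⟨i.val-1, lt_of_le_of_lt (Nat.sub_le _ _) i.isLt⟩ else 0 := by
  unfold Matrix.mulVec dotProduct
  split_ifs with h
  · rw [Finset.sum_eq_single (⟨i.val-1, lt_of_le_of_lt (Nat.sub_le _ _) i.isLt⟩ : Fin (2*K))]
    · simp only [Matrix.of_apply]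
      rw [if_pos]; omega
    · intro j _ hj
      simp only [Matrix.of_apply]
      rw [if_neg, zero_mul]
      intro hc; apply hj; apply Fin.ext; simp; omega
    · simp
  · apply Finset.sum_eq_zero; intro j _
    simp only [Matrix.of_apply]
    rw [if_neg, zero_mul]
    omega

lemma I1 (a b μ θ α x : ℝ) (h2 : μ * Real.cos (2*α) = a + b * Real.cos θ)
    (h3 : μ * Real.sin (2*α) = b * Real.sin θ) :
    a * Real.cos (x - α) + b * Real.cos (x + θ - α) = μ * Real.cos (x + α) := by
  rw [Real.cos_two_mul'] at h2
  rw [Real.sin_two_mul] at h3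
  have pyth := Real.sin_sq_add_cos_sq α
  simp only [Real.cos_add, Real.cos_sub, Real.sin_add, Real.sin_sub]
  linear_combination (-(Real.cos x * Real.cos α + Real.sin x * Real.sin α)) * h2
    + (-(Real.cos x * Real.sin α - Real.sin x * Real.cos α)) * h3
    + (μ * (Real.cos x * Real.cos α - Real.sin x * Real.sin α)) * pyth

lemma I2 (a b μ θ α x : ℝ) (h2 : μ * Real.cos (2*α) = a + b * Real.cos θ)
    (h3 : μ * Real.sin (2*α) = b * Real.sin θ) :
    b * Real.cos (x - θ + α) + a * Real.cos (x + α) = μ * Real.cos (x - α) := by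
  rw [Real.cos_two_mul'] at h2
  rw [Real.sin_two_mul] at h3
  have pyth := Real.sin_sq_add_cos_sq α
  simp only [Real.cos_add, Real.cos_sub, Real.sin_add, Real.sin_sub]
  linear_combination (-(Real.cos x * Real.cos α - Real.sin x * Real.sin α)) * h2
    + (-(Real.cos x * Real.sin α + Real.sin x * Real.cos α)) * h3
    + (μ * (Real.cos x * Real.cos α + Real.sin x * Real.sin α)) * pyth

noncomputable def vvec (K : ℕ) (θ α : ℝ) : Fin (2*K) → ℝ :=
  fun i => if i.val % 2 = 0 then Real.cos ((i.val/2 : ℕ) * θ + α)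
           else Real.cos (((i.val/2 : ℕ) + 1) * θ - α)

lemma eigen (K : ℕ) (hK : 1 ≤ K) (a b c θ μ α : ℝ)
    (hs : Real.sin (K * θ) = 0)
    (h2 : μ * Real.cos (2*α) = a + b * Real.cos θ)
    (h3 : μ * Real.sin (2*α) = b * Real.sin θ) :
    (Mmat K a b c).mulVec (vvec K θ α) = (c + μ) • (vvec K θ α) := by
  funext i
  rw [Mmat, Matrix.add_mulVec, Matrix.add_mulVec, Pi.add_apply, Pi.add_apply,
    Matrix.mulVec_diagonal, up_mulVec, low_mulVec, Pi.smul_apply, smul_eq_mul]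
  obtain ⟨n, hn⟩ := i
  simp only []
  by_cases h0 : n = 0
  · subst h0
    rw [dif_pos (by omega : 0 + 1 < 2*K), dif_neg (by omega)]
    have e1 : vvec K θ α ⟨0, hn⟩ = Real.cos α := by
      simp [vvec]
    have e2 : vvec K θ α ⟨0+1, by omega⟩ = Real.cos (θ - α) := by
      simp [vvec]
    rw [if_pos (Or.inl rfl), e1, e2]
    have := I1 a b μ θ α 0 h2 h3
    rw [show (0:ℝ) - α = -α by ring, Real.cos_neg, show (0:ℝ) + θ - α = θ - α by ring,
      show (0:ℝ) + α = α by ring] at this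
    have ho : offd a b 0 = b := by simp [offd]
    rw [ho]; linarith
  · by_cases hl : n = 2*K - 1
    · subst hl
      rw [dif_neg (by omega), dif_pos (by omega : 0 < 2*K-1)]
      have e1 : vvec K θ α ⟨2*K-1, hn⟩ = Real.cos (K*θ - α) := by
        simp only [vvec]
        rw [if_neg (by omega), show (2*K-1)/2 = K - 1 by omega]
        congr 1
        push_cast [Nat.cast_sub hK]
        ring
      have e2 : vvec K θ α ⟨2*K-1-1, by omega⟩ = Real.cos ((K-1:ℝ)*θ + α) := by
        simp only [vvec]
        rw [if_pos (by omega), show (2*K-1-1)/2 = K - 1 by omega]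
        congr 1
        push_cast [Nat.cast_sub hK]
        ring
      have ho : offd a b (2*K-1-1) = b := by simp only [offd]; rw [if_pos (by omega)]
      rw [if_pos (Or.inr rfl), e1, e2, ho]
      have key := I2 a b μ θ α (K*θ) h2 h3
      rw [show (K:ℝ)*θ - θ + α = (K-1:ℝ)*θ + α by ring] at key
      have hcc : Real.cos ((K:ℝ)*θ + α) = Real.cos ((K:ℝ)*θ - α) := by
        rw [Real.cos_add, Real.cos_sub, hs]; ring
      rw [hcc] at key
      linarith
    · by_cases hpar : n % 2 = 0
      · -- even interior
        rw [dif_pos (by omega : n + 1 < 2*K), dif_pos (by omega : 0 < n)]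
        have e0 : vvec K θ α ⟨n, hn⟩ = Real.cos ((n/2 : ℕ)*θ + α) := by
          simp only [vvec]
          rw [if_pos hpar]
        have e1 : vvec K θ α ⟨n+1, by omega⟩ = Real.cos (((n/2 : ℕ) + 1 : ℝ)*θ - α) := by
          simp only [vvec]
          rw [if_neg (by omega), show (n+1)/2 = n/2 by omega]
        have e2 : vvec K θ α ⟨n-1, by omega⟩ = Real.cos ((n/2 : ℕ)*θ - α) := by
          simp only [vvec]
          rw [if_neg (by omega), show (n-1)/2 = n/2 - 1 by omega]
          congr 1
          push_cast [Nat.cast_sub (by omega : 1 ≤ n/2)]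
          ring
        have ho1 : offd a b n = b := by simp [offd, hpar]
        have ho2 : offd a b (n-1) = a := by simp only [offd]; rw [if_neg (by omega)]
        rw [if_neg (by omega), e0, e1, e2, ho1, ho2]
        have key := I1 a b μ θ α ((n/2 : ℕ)*θ) h2 h3
        rw [show ((n/2 : ℕ):ℝ)*θ + θ - α = ((n/2:ℕ) + 1 : ℝ)*θ - α by ring] at key
        linarith
      · -- odd interior
        rw [dif_pos (by omega : n + 1 < 2*K), dif_pos (by omega : 0 < n)]
        have e0 : vvec K θ α ⟨n, hn⟩ = Real.cos (((n/2 : ℕ) + 1 : ℝ)*θ - α) := by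
          simp only [vvec]
          rw [if_neg (by omega)]
        have e1 : vvec K θ α ⟨n+1, by omega⟩ = Real.cos (((n/2 : ℕ) + 1 : ℝ)*θ + α) := by
          simp only [vvec]
          rw [if_pos (by omega : (n+1) % 2 = 0), show (n+1)/2 = n/2 + 1 by omega]
          congr 1
          push_cast
          ring
        have e2 : vvec K θ α ⟨n-1, by omega⟩ = Real.cos ((n/2 : ℕ)*θ + α) := by
          simp only [vvec]
          rw [if_pos (by omega : (n-1) % 2 = 0), show (n-1)/2 = n/2 by omega]
        have ho1 : offd a b n = a := by simp only [offd]; rw [if_neg (by omega)]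
        have ho2 : offd a b (n-1) = b := by simp only [offd]; rw [if_pos (by omega)]
        rw [if_neg (by omega), e0, e1, e2, ho1, ho2]
        have key := I2 a b μ θ α (((n/2 : ℕ) + 1 : ℝ)*θ) h2 h3
        rw [show ((n/2:ℕ) + 1 : ℝ)*θ - θ + α = ((n/2 : ℕ):ℝ)*θ + α by ring] at key
        linarith



lemma exists_alpha (a b μ Co Si : ℝ) (hμ : μ^2 = a^2 + b^2 + 2*a*b*Co)
    (hCS : Co^2 + Si^2 = 1) (h0 : μ ≠ 0) :
    ∃ α, μ * Real.cos (2*α) = a + b*Co ∧ μ * Real.sin (2*α) = b*Si := by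
  set z : ℂ := ⟨(a+b*Co)/μ, (b*Si)/μ⟩ with hz
  have hre : z.re = (a+b*Co)/μ := rfl
  have him : z.im = (b*Si)/μ := rfl
  have hsq : z.re^2 + z.im^2 = 1 := by
    rw [hre, him]
    field_simp
    linear_combination (b^2) * hCS - hμ
  have habs : ‖z‖ = 1 := by
    have h1 : ‖z‖^2 = 1 := by
      rw [Complex.sq_norm, Complex.normSq_apply]
      linear_combination hsq - z.re^2 + z.re*z.re - z.im^2 + z.im*z.im
    nlinarith [norm_nonneg z]
  have hz0 : z ≠ 0 := by
    intro h; rw [h] at habs; simp at habs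
  refine ⟨z.arg / 2, ?_, ?_⟩
  · rw [show 2 * (z.arg/2) = z.arg by ring, Complex.cos_arg hz0, habs, div_one, hre]
    field_simp
  · rw [show 2 * (z.arg/2) = z.arg by ring, Complex.sin_arg, habs, div_one, him]
    field_simp

lemma eval_charpoly' {n : ℕ} (M : Matrix (Fin n) (Fin n) ℝ) (x : ℝ) :
    M.charpoly.eval x = (x • (1 : Matrix (Fin n) (Fin n) ℝ) - M).det := by
  rw [Matrix.charpoly, ← Polynomial.coe_evalRingHom, RingHom.map_det]
  congr 1
  ext i j
  by_cases h : i = j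
  · subst h
    rw [RingHom.mapMatrix_apply, Matrix.map_apply, Matrix.charmatrix_apply_eq]
    simp [Matrix.one_apply]
  · rw [RingHom.mapMatrix_apply, Matrix.map_apply, Matrix.charmatrix_apply_ne _ _ _ h]
    simp [Matrix.one_apply_ne h, h]

lemma isRoot_of_eigen {n : ℕ} (M : Matrix (Fin n) (Fin n) ℝ) (lam : ℝ) (v : Fin n → ℝ)
    (hv : v ≠ 0) (h : M.mulVec v = lam • v) : M.charpoly.IsRoot lam := by
  have hdet : (lam • (1 : Matrix (Fin n) (Fin n) ℝ) - M).det = 0 := by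
    rw [← Matrix.exists_mulVec_eq_zero_iff]
    refine ⟨v, hv, ?_⟩
    rw [Matrix.sub_mulVec, Matrix.smul_mulVec, Matrix.one_mulVec, h, sub_self]
  rw [Polynomial.IsRoot, eval_charpoly', hdet]

lemma monic_dvd_eq {p q : ℝ[X]} (hp : p.Monic) (hq : q.Monic) (hdvd : q ∣ p)
    (hdeg : q.natDegree = p.natDegree) : p = q := by
  obtain ⟨r, hr⟩ := hdvd
  have hr0 : r ≠ 0 := by
    rintro rfl
    rw [mul_zero] at hr
    exact hp.ne_zero hr
  have hmr : r.Monic := hq.of_mul_monic_left (hr ▸ hp)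
  have hd : q.natDegree + r.natDegree = p.natDegree := by
    rw [hr, Polynomial.natDegree_mul hq.ne_zero hr0]
  have : r.natDegree = 0 := by omega
  rw [Polynomial.Monic.natDegree_eq_zero hmr] at this
  rw [hr, this, mul_one]




noncomputable def rhs (K : ℕ) (a b c : ℝ) : ℝ[X] :=
  (X - C (c + a + b)) * (X - C (c + a - b)) *
    ∏ j ∈ Finset.range (K - 1),
      ((X - C c) ^ 2 - C (a ^ 2 + b ^ 2 + 2 * a * b * Real.cos (Real.pi * (j + 1) / K)))

-- basic facts about rho
section rho
variable (K : ℕ) (a b : ℝ)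

noncomputable def rho (K : ℕ) (a b : ℝ) (m : ℕ) : ℝ :=
  a^2 + b^2 + 2*a*b*Real.cos (Real.pi * m / K)

lemma rho_zero (hK : 1 ≤ K) : rho K a b 0 = (a+b)^2 := by
  simp [rho]
  ring

lemma rho_K (hK : 1 ≤ K) : rho K a b K = (a-b)^2 := by
  have hK0 : (K:ℝ) ≠ 0 := Nat.cast_ne_zero.mpr (by omega)
  rw [rho, show Real.pi * K / K = Real.pi by field_simp, Real.cos_pi]
  ring

lemma rho_pos (hab : a^2 ≠ b^2) (m : ℕ) : 0 < rho K a b m := by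
  have h1 : -1 ≤ Real.cos (Real.pi * m / K) := Real.neg_one_le_cos _
  have h2 : Real.cos (Real.pi * m / K) ≤ 1 := Real.cos_le_one _
  have hamb : a - b ≠ 0 := fun h => hab (by rw [show a = b by linarith])
  have hapb : a + b ≠ 0 := fun h => hab (by rw [show a = -b by linarith]; ring)
  have h3 : 0 < (a-b)^2 := by positivity
  have h4 : 0 < (a+b)^2 := by positivity
  rw [rho]
  rcases le_or_gt 0 (a*b) with hab' | hab'
  · nlinarith [mul_nonneg hab' (by linarith : (0:ℝ) ≤ Real.cos (Real.pi * m / K) + 1)]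
  · nlinarith [mul_nonneg (by linarith : (0:ℝ) ≤ -(a*b)) (by linarith : (0:ℝ) ≤ 1 - Real.cos (Real.pi * m / K))]

lemma rho_inj (hK : 1 ≤ K) (ha : a ≠ 0) (hb : b ≠ 0) :
    ∀ m ≤ K, ∀ m' ≤ K, rho K a b m = rho K a b m' → m = m' := by
  intro m hm m' hm' h
  have hKpos : (0:ℝ) < K := by exact_mod_cast Nat.pos_of_ne_zero (by omega)
  have h2ab : (2*a*b) ≠ 0 := by simp [ha, hb]
  have hcos : Real.cos (Real.pi * m / K) = Real.cos (Real.pi * m' / K) := by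
    apply mul_left_cancel₀ h2ab
    rw [rho, rho] at h
    linarith
  have hmem : ∀ l : ℕ, l ≤ K → Real.pi * l / K ∈ Set.Icc 0 Real.pi := by
    intro l hl
    constructor
    · positivity
    · rw [div_le_iff₀ hKpos]
      have : (l:ℝ) ≤ K := Nat.cast_le.mpr hl
      nlinarith [Real.pi_pos]
  have h5 := Real.injOn_cos (hmem m hm) (hmem m' hm') hcos
  rw [div_left_inj' hKpos.ne', mul_right_inj' Real.pi_ne_zero] at h5
  exact_mod_cast h5

end rho


lemma vvec_ne_zero (K : ℕ) (hK : 1 ≤ K) (θ α : ℝ) (hθ1 : 0 < θ) (hθ2 : θ < Real.pi) :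
    vvec K θ α ≠ 0 := by
  intro hzero
  have h0 := congrFun hzero ⟨0, by omega⟩
  have h1 := congrFun hzero ⟨1, by omega⟩
  simp [vvec] at h0 h1
  have hsθ := Real.sin_pos_of_pos_of_lt_pi hθ1 hθ2
  rw [Real.cos_sub, h0] at h1
  have h2 : Real.sin θ * Real.sin α = 0 := by linarith
  have h3 : Real.sin α = 0 := by
    rcases mul_eq_zero.mp h2 with h | h
    · exact absurd h (ne_of_gt hsθ)
    · exact h
  have h4 := Real.sin_sq_add_cos_sq α
  rw [h0, h3] at h4
  norm_num at h4

lemma charpoly_good (K : ℕ) (hK : 1 ≤ K) (a b c : ℝ) (ha : a ≠ 0) (hb : b ≠ 0)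
    (hab : a^2 ≠ b^2) :
    (Mmat K a b c).charpoly = rhs K a b c := by
  have hKR : (0:ℝ) < K := by exact_mod_cast Nat.pos_of_ne_zero (by omega)
  set s : ℕ → ℝ := fun m => Real.sqrt (rho K a b m) with hs_def
  have hs_pos : ∀ m, 0 < s m := fun m => Real.sqrt_pos.mpr (rho_pos K a b hab m)
  have hs_sq : ∀ m, (s m)^2 = rho K a b m := fun m => Real.sq_sqrt (rho_pos K a b hab m).le
  have heq : ∀ (m m' : ℕ) (u v : ℝ), m ≤ K → m' ≤ K → u^2 = rho K a b m →
      v^2 = rho K a b m' → u = v → m = m' := by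
    intro m m' u v hm hm' hu hv huv
    exact rho_inj K a b hK ha hb m hm m' hm' (by rw [← hu, ← hv, huv])
  set L : Multiset ℝ :=
    (c+a+b) ::ₘ (c+a-b) ::ₘ
      ((Multiset.range (K-1)).map (fun j => c + s (j+1))
        + (Multiset.range (K-1)).map (fun j => c - s (j+1))) with hL_def
  have hroot : ∀ x ∈ L, (Mmat K a b c).charpoly.IsRoot x := by
    intro x hx
    rw [hL_def, Multiset.mem_cons, Multiset.mem_cons, Multiset.mem_add,
      Multiset.mem_map, Multiset.mem_map] at hx
    have huse : ∀ (θ μ α : ℝ), Real.sin (K * θ) = 0 →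
        μ * Real.cos (2*α) = a + b * Real.cos θ → μ * Real.sin (2*α) = b * Real.sin θ →
        vvec K θ α ≠ 0 → x = c + μ → (Mmat K a b c).charpoly.IsRoot x := by
      intro θ μ α h1 h2 h3 hv hx
      subst hx
      exact isRoot_of_eigen _ _ _ hv (eigen K hK a b c θ μ α h1 h2 h3)
    have hv0 : ∀ θ : ℝ, vvec K θ 0 ≠ 0 := by
      intro θ hzero
      have h := congrFun hzero ⟨0, by omega⟩
      simp [vvec] at h
    have hbindcase : ∀ j : ℕ, j ∈ Multiset.range (K-1) → ∀ μ : ℝ,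
        μ^2 = rho K a b (j+1) → μ ≠ 0 → x = c + μ →
        (Mmat K a b c).charpoly.IsRoot x := by
      intro j hj μ hμsq hμ0 hx
      rw [Multiset.mem_range] at hj
      have hjK : ((j:ℝ)+1) < K := by
        have : j + 1 < K := by omega
        exact_mod_cast this
      obtain ⟨α, hα1, hα2⟩ := exists_alpha a b μ
        (Real.cos (Real.pi * (↑(j+1):ℝ) / K)) (Real.sin (Real.pi * (↑(j+1):ℝ) / K))
        hμsq (Real.cos_sq_add_sin_sq _) hμ0
      have hθ1 : 0 < Real.pi * (↑(j+1):ℝ) / K := by positivity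
      have hθ2 : Real.pi * (↑(j+1):ℝ) / K < Real.pi := by
        rw [div_lt_iff₀ hKR]
        push_cast
        nlinarith [Real.pi_pos]
      have hsin : Real.sin ((K:ℝ) * (Real.pi * (↑(j+1):ℝ) / K)) = 0 := by
        rw [show (K:ℝ) * (Real.pi * (↑(j+1):ℝ) / K) = (↑(j+1):ℝ) * Real.pi by
          field_simp]
        exact Real.sin_nat_mul_pi (j+1)
      exact huse _ μ α hsin hα1 hα2 (vvec_ne_zero K hK _ α hθ1 hθ2) hx
    rcases hx with rfl | rfl | ⟨⟨j, hj, rfl⟩ | ⟨j, hj, rfl⟩⟩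
    · exact huse 0 (a+b) 0 (by simp) (by norm_num) (by norm_num) (hv0 0) (by ring)
    · exact huse Real.pi (a-b) 0 (Real.sin_nat_mul_pi K)
        (by rw [show (2:ℝ)*0 = 0 by ring, Real.cos_zero, Real.cos_pi]; ring)
        (by rw [show (2:ℝ)*0 = 0 by ring, Real.sin_zero, Real.sin_pi]; ring)
        (hv0 Real.pi) (by ring)
    · exact hbindcase j hj (s (j+1)) (hs_sq _) (ne_of_gt (hs_pos _)) rfl
    · exact hbindcase j hj (-(s (j+1))) (by rw [neg_pow]; simp [hs_sq]) (by simp [ne_of_gt (hs_pos (j+1))])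
        (by ring)
  have hnodup : L.Nodup := by
    rw [hL_def]
    refine Multiset.nodup_cons.mpr ⟨?_, Multiset.nodup_cons.mpr ⟨?_, ?_⟩⟩
    · rw [Multiset.mem_cons, Multiset.mem_add, Multiset.mem_map, Multiset.mem_map]
      rintro (h | ⟨j, hj, hj2⟩ | ⟨j, hj, hj2⟩)
      · exact hb (by linarith)
      · rw [Multiset.mem_range] at hj
        have : 0 = j + 1 := heq 0 (j+1) (a+b) (s (j+1)) (by omega) (by omega)
          (rho_zero K a b hK).symm (hs_sq _) (by linarith)
        omega
      · rw [Multiset.mem_range] at hj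
        have : 0 = j + 1 := heq 0 (j+1) (a+b) (-(s (j+1))) (by omega) (by omega)
          (rho_zero K a b hK).symm (by rw [neg_pow]; simp [hs_sq]) (by linarith)
        omega
    · rw [Multiset.mem_add, Multiset.mem_map, Multiset.mem_map]
      rintro (⟨j, hj, hj2⟩ | ⟨j, hj, hj2⟩)
      · rw [Multiset.mem_range] at hj
        have : K = j + 1 := heq K (j+1) (a-b) (s (j+1)) (by omega) (by omega)
          (rho_K K a b hK).symm (hs_sq _) (by linarith)
        omega
      · rw [Multiset.mem_range] at hj
        have : K = j + 1 := heq K (j+1) (a-b) (-(s (j+1))) (by omega) (by omega)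
          (rho_K K a b hK).symm (by rw [neg_pow]; simp [hs_sq]) (by linarith)
        omega
    · rw [Multiset.nodup_add]
      refine ⟨?_, ?_, ?_⟩
      · apply Multiset.Nodup.map_on ?_ (Multiset.nodup_range _)
        intro x hx y hy hxy
        rw [Multiset.mem_range] at hx hy
        have := heq (x+1) (y+1) (s (x+1)) (s (y+1)) (by omega) (by omega)
          (hs_sq _) (hs_sq _) (by linarith)
        omega
      · apply Multiset.Nodup.map_on ?_ (Multiset.nodup_range _)
        intro x hx y hy hxy
        rw [Multiset.mem_range] at hx hy
        have := heq (x+1) (y+1) (s (x+1)) (s (y+1)) (by omega) (by omega)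
          (hs_sq _) (hs_sq _) (by linarith)
        omega
      · rw [Multiset.disjoint_left]
        intro x hx hx'
        obtain ⟨i, hi, rfl⟩ := Multiset.mem_map.mp hx
        obtain ⟨j', hj', hj2⟩ := Multiset.mem_map.mp hx'
        have h1 := hs_pos (i+1)
        have h2 := hs_pos (j'+1)
        linarith
  have hp0 : (Mmat K a b c).charpoly ≠ 0 := (Matrix.charpoly_monic _).ne_zero
  have hcard : Multiset.card L = 2*K := by
    rw [hL_def]
    simp only [Multiset.card_cons, Multiset.card_add, Multiset.card_map, Multiset.card_range]
    omega
  have hle : L ≤ (Mmat K a b c).charpoly.roots := by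
    rw [Multiset.le_iff_count]
    intro r
    by_cases hr : r ∈ L
    · calc Multiset.count r L ≤ 1 := Multiset.nodup_iff_count_le_one.mp hnodup r
        _ ≤ _ := Multiset.one_le_count_iff_mem.mpr
            (Polynomial.mem_roots'.mpr ⟨hp0, hroot r hr⟩)
    · rw [Multiset.count_eq_zero_of_notMem hr]
      exact Nat.zero_le _
  have hdvd : (L.map (fun r => X - C r)).prod ∣ (Mmat K a b c).charpoly :=
    dvd_trans (Multiset.prod_dvd_prod_of_le (Multiset.map_le_map hle))
      (Polynomial.prod_multiset_X_sub_C_dvd _)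
  have hqmonic : ((L.map (fun r => X - C r)).prod).Monic :=
    Polynomial.monic_multiset_prod_of_monic L _ (fun r _ => Polynomial.monic_X_sub_C r)
  have hqdeg : ((L.map (fun r => X - C r)).prod).natDegree = 2*K := by
    rw [Polynomial.natDegree_multiset_prod_of_monic _
      (fun f hf => by obtain ⟨r, _, rfl⟩ := Multiset.mem_map.mp hf; exact Polynomial.monic_X_sub_C r)]
    rw [Multiset.map_map]
    simp only [Function.comp_apply, Polynomial.natDegree_X_sub_C]
    rw [Multiset.map_const', Multiset.sum_replicate, smul_eq_mul, mul_one, hcard]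
  have hmain : (Mmat K a b c).charpoly = (L.map (fun r => X - C r)).prod :=
    monic_dvd_eq (Matrix.charpoly_monic _) hqmonic hdvd
      (by rw [hqdeg, Matrix.charpoly_natDegree_eq_dim, Fintype.card_fin])
  rw [hmain, hL_def]
  have hms : ∀ (f : ℕ → ℝ[X]) (n : ℕ),
      ((Multiset.range n).map f).prod = ∏ j ∈ Finset.range n, f j := by
    intro f n
    rw [Finset.prod_eq_multiset_prod, Finset.range_val]
  have hpair : ∀ (sv r : ℝ), sv^2 = r →
      (X - C (c + sv)) * (X - C (c - sv)) = (X - C c)^2 - C r := by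
    intro sv r h
    rw [← h]
    have hC : C (sv^2) = (C sv)^2 := by rw [map_pow]
    rw [C_add, C_sub, hC]
    ring
  simp only [Multiset.map_cons, Multiset.prod_cons, Multiset.map_add, Multiset.prod_add,
    Multiset.map_map]
  rw [hms, hms, rhs, ← Finset.prod_mul_distrib, ← mul_assoc]
  congr 1
  refine Finset.prod_congr rfl fun j _ => ?_
  simp only [Function.comp_apply]
  rw [hpair (s (j+1)) (rho K a b (j+1)) (hs_sq _), rho]
  congr 3
  push_cast
  ring

lemma eval_rhs (K : ℕ) (a b c x : ℝ) : Polynomial.eval x (rhs K a b c) =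
    (x - (c+a+b)) * (x - (c+a-b)) *
      ∏ j ∈ Finset.range (K-1),
        ((x - c)^2 - (a^2 + b^2 + 2*a*b*Real.cos (Real.pi * (j+1) / K))) := by
  simp [rhs, Polynomial.eval_prod]

lemma cont_det (K : ℕ) (a b c x : ℝ) :
    Continuous fun t : ℝ =>
      (x • (1 : Matrix (Fin (2*K)) (Fin (2*K)) ℝ) - Mmat K (a+t) (b+2*t) c).det := by
  apply Continuous.matrix_det
  apply continuous_matrix
  intro i j
  simp only [Matrix.sub_apply, Matrix.smul_apply, Matrix.one_apply, smul_eq_mul, Mmat,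
    Matrix.add_apply, Matrix.of_apply, Matrix.diagonal_apply, offd]
  apply Continuous.sub continuous_const
  apply Continuous.add
  apply Continuous.add
  · split_ifs <;> fun_prop
  · split_ifs <;> fun_prop
  · split_ifs <;> fun_prop

lemma charpoly_Mmat (K : ℕ) (hK : 1 ≤ K) (a b c : ℝ) :
    (Mmat K a b c).charpoly = rhs K a b c := by
  apply Polynomial.funext
  intro x
  have key : ∀ t : ℝ, (a+t) ≠ 0 → (b+2*t) ≠ 0 → (a+t)^2 ≠ (b+2*t)^2 →
      (x • (1 : Matrix (Fin (2*K)) (Fin (2*K)) ℝ) - Mmat K (a+t) (b+2*t) c).det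
        = Polynomial.eval x (rhs K (a+t) (b+2*t) c) := by
    intro t h1 h2 h3
    rw [← eval_charpoly', charpoly_good K hK _ _ c h1 h2 h3]
  have hdense : Dense (({ -a, -(b/2), a - b, -((a+b)/3) } : Set ℝ)ᶜ) := by
    apply Set.Countable.dense_compl ℝ
    exact ((((Set.finite_singleton _).insert _).insert _).insert _).countable
  have hcontf : Continuous (fun t : ℝ =>
      (x • (1 : Matrix (Fin (2*K)) (Fin (2*K)) ℝ) - Mmat K (a+t) (b+2*t) c).det) :=
    cont_det K a b c x
  have hcontg : Continuous (fun t : ℝ => Polynomial.eval x (rhs K (a+t) (b+2*t) c)) := by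
    simp only [eval_rhs]
    apply Continuous.mul
    · fun_prop
    · apply continuous_finset_prod
      intro j _
      fun_prop
  have heqon : Set.EqOn
      (fun t : ℝ => (x • (1 : Matrix (Fin (2*K)) (Fin (2*K)) ℝ) - Mmat K (a+t) (b+2*t) c).det)
      (fun t : ℝ => Polynomial.eval x (rhs K (a+t) (b+2*t) c))
      (({ -a, -(b/2), a - b, -((a+b)/3) } : Set ℝ)ᶜ) := by
    intro t ht
    simp only [Set.mem_compl_iff, Set.mem_insert_iff, Set.mem_singleton_iff] at ht
    push_neg at ht
    obtain ⟨h1, h2, h3, h4⟩ := ht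
    apply key t
    · intro h; apply h1; linarith
    · intro h; apply h2; linarith
    · intro h
      have h5 : ((a+t) - (b+2*t)) * ((a+t) + (b+2*t)) = 0 := by linear_combination h
      rcases mul_eq_zero.mp h5 with h6 | h6
      · apply h3; linarith
      · apply h4; linarith
  have hfg := hcontf.ext_on hdense hcontg heqon
  have h0 := congrFun hfg 0
  norm_num at h0
  rw [eval_charpoly', h0]

end MesaAux



/-- Characteristic polynomial of the `2K × 2K` mesa interaction matrix `M⁻¹`
(tridiagonal, diagonal `c` except corners `c+a`, off-diagonal alternating
`b, a, b, a, …, b`): its eigenvalues are `c ± √(a²+b²+2ab cos(πj/K))`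
for `j = 1, …, K-1` together with `c+a+b` and `c+a-b`. -/
theorem mesa_interaction_matrix_charpoly (K : ℕ) (hK : 1 ≤ K) (a b c : ℝ)
    (N : Matrix (Fin (2 * K)) (Fin (2 * K)) ℝ)
    (hdiag : ∀ i : Fin (2 * K),
      N i i = if i.val = 0 ∨ i.val = 2 * K - 1 then c + a else c)
    (hoff : ∀ i j : Fin (2 * K), i.val + 1 = j.val →
      N i j = (if i.val % 2 = 0 then b else a) ∧
      N j i = (if i.val % 2 = 0 then b else a))
    (hzero : ∀ i j : Fin (2 * K),
      i.val ≠ j.val → i.val + 1 ≠ j.val → j.val + 1 ≠ i.val → N i j = 0) :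
    N.charpoly = (X - C (c + a + b)) * (X - C (c + a - b)) *
      ∏ j ∈ Finset.range (K - 1),
        ((X - C c) ^ 2
          - C (a ^ 2 + b ^ 2 + 2 * a * b * Real.cos (Real.pi * (j + 1) / K))) := by
  --

  have hNM : N = MesaAux.Mmat K a b c := by
    ext i j
    by_cases h1 : i.val = j.val
    · have hij : i = j := Fin.ext h1
      subst hij
      rw [hdiag i, MesaAux.Mmat]
      simp only [Matrix.add_apply, Matrix.of_apply, Matrix.diagonal_apply_eq]
      rw [if_neg (show ¬(i.val + 1 = i.val) by omega)]
      ring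
    · by_cases h2 : i.val + 1 = j.val
      · rw [(hoff i j h2).1, MesaAux.Mmat]
        simp only [Matrix.add_apply, Matrix.of_apply]
        rw [Matrix.diagonal_apply_ne _ (fun h => h1 (by rw [h])), if_pos h2,
          if_neg (show ¬(j.val + 1 = i.val) by omega)]
        simp [MesaAux.offd]
      · by_cases h3 : j.val + 1 = i.val
        · rw [(hoff j i h3).2, MesaAux.Mmat]
          simp only [Matrix.add_apply, Matrix.of_apply]
          rw [Matrix.diagonal_apply_ne _ (fun h => h1 (by rw [h])), if_neg h2, if_pos h3]
          simp [MesaAux.offd]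
        · rw [hzero i j h1 h2 h3, MesaAux.Mmat]
          simp only [Matrix.add_apply, Matrix.of_apply]
          rw [Matrix.diagonal_apply_ne _ (fun h => h1 (by rw [h])), if_neg h2, if_neg h3]
          ring
  rw [hNM, MesaAux.charpoly_Mmat K hK a b c, MesaAux.rhs]
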